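/- Let a, b, c be complex numbers satisfying: |c| < 1; |a|²(1+|c|²) + 2Re(a²·conj(c)) < (1−|c|²)²; |b|² < 1 − |c|² − |a|²(1+|c|²)/(1−|c|²) − 2Re(a²·conj(c))/(1−|c|²); and Re(a²·conj(c)) ≥ −|a|²|c|². Then every complex root of the polynomial z⁴ + p₁z³ + p₂z² + p₃z + p₄, where p₁ = −(|a|²+|b|²), p₂ = −2|c|² − 2Re(a²·conj(c)), p₃ = |c|²(|b|²−|a|²), p₄ = |c|⁴, has modulus strictly less than 1. -/

import Mathlib

open ComplexConjugate

set_option maxHeartbeats 2000000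

/-- Asymptotic mean-square stability of the Adams-type two-step schemes (`d = 0` case):
under the stated conditions all roots of the characteristic polynomial lie strictly
inside the unit disk. -/
theorem stmt_7 (a b c : ℂ)
    (h₁ : ‖c‖ < 1)
    (h₂ : ‖a‖ ^ 2 * (1 + ‖c‖ ^ 2) + 2 * (a ^ 2 * conj c).re
        < (1 - ‖c‖ ^ 2) ^ 2)
    (h₃ : ‖b‖ ^ 2
        < 1 - ‖c‖ ^ 2
          - ‖a‖ ^ 2 * (1 + ‖c‖ ^ 2) / (1 - ‖c‖ ^ 2)
          - 2 * (a ^ 2 * conj c).re / (1 - ‖c‖ ^ 2))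
    (h₄ : (a ^ 2 * conj c).re ≥ -(‖a‖ ^ 2 * ‖c‖ ^ 2))
    (p₁ p₂ p₃ p₄ : ℝ)
    (hp₁ : p₁ = -(‖a‖ ^ 2 + ‖b‖ ^ 2))
    (hp₂ : p₂ = -2 * ‖c‖ ^ 2 - 2 * (a ^ 2 * conj c).re)
    (hp₃ : p₃ = ‖c‖ ^ 2 * (‖b‖ ^ 2 - ‖a‖ ^ 2))
    (hp₄ : p₄ = ‖c‖ ^ 4) :
    ∀ z : ℂ, z ^ 4 + (p₁ : ℂ) * z ^ 3 + (p₂ : ℂ) * z ^ 2 + (p₃ : ℂ) * z + (p₄ : ℂ) = 0 →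
      ‖z‖ < 1 := by
  intro z hz
  by_contra hlt
  push_neg at hlt
  set A : ℝ := ‖a‖ ^ 2 with hA
  set B : ℝ := ‖b‖ ^ 2 with hB
  set C : ℝ := ‖c‖ ^ 2 with hC
  set R : ℝ := (a ^ 2 * conj c).re with hR
  set t : ℝ := ‖z‖ with htdef
  have ht : 1 ≤ t := hlt
  have ht0 : (0:ℝ) < t := by linarith
  have hz0 : z ≠ 0 := by
    intro h; rw [h] at htdef; simp at htdef; linarith [htdef ▸ ht]
  -- basic real facts
  have hA0 : 0 ≤ A := sq_nonneg _
  have hB0 : 0 ≤ B := sq_nonneg _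
  have hC0 : 0 ≤ C := sq_nonneg _
  have hC1 : C < 1 := by
    have := norm_nonneg c; nlinarith
  have h1C : (0:ℝ) < 1 - C := by linarith
  have h3' : A * (1 + C) + 2 * R + B * (1 - C) < (1 - C) ^ 2 := by
    have h := mul_lt_mul_of_pos_right h₃ h1C
    have he : (1 - C - A * (1 + C) / (1 - C) - 2 * R / (1 - C)) * (1 - C)
        = (1 - C) ^ 2 - A * (1 + C) - 2 * R := by field_simp
    rw [he] at h; linarith
  have hAC : A < 1 - C := by nlinarith
  have hBC : B < 1 - C := by nlinarith [mul_nonneg hA0 h1C.le]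
  have hRub : R ≤ A * ‖c‖ := by
    have h := Complex.re_le_norm (a ^ 2 * conj c)
    rwa [norm_mul, norm_pow, Complex.norm_conj] at h
  -- complex identities
  have hzc : z * conj z = ((t ^ 2 : ℝ) : ℂ) := by
    rw [Complex.mul_conj]; norm_cast; exact (Complex.sq_norm z).symm
  have hc4 : ((‖c‖ : ℝ) : ℂ) ^ 4 = (C:ℂ) ^ 2 := by rw [hC]; push_cast; ring
  have hq : z ^ 4 - ((A:ℂ) + (B:ℂ)) * z ^ 3 - (2*(C:ℂ) + 2*(R:ℂ)) * z ^ 2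
      + (C:ℂ) * ((B:ℂ) - (A:ℂ)) * z + (C:ℂ) ^ 2 = 0 := by
    rw [hp₁, hp₂, hp₃, hp₄] at hz
    push_cast at hz
    linear_combination hz - hc4
  have hmain : (((t^2:ℝ):ℂ) * z + (C:ℂ) * conj z) ^ 2
      - (A:ℂ) * ((t^2:ℝ):ℂ) * (((t^2:ℝ):ℂ) * z + (C:ℂ) * conj z)
      - (((2*R+4*C) * t^4 : ℝ):ℂ)
      - (B:ℂ) * ((t^2:ℝ):ℂ) * (((t^2:ℝ):ℂ) * z - (C:ℂ) * conj z) = 0 := by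
    have hstep : z^2 * ((((t^2:ℝ):ℂ) * z + (C:ℂ) * conj z) ^ 2
        - (A:ℂ) * ((t^2:ℝ):ℂ) * (((t^2:ℝ):ℂ) * z + (C:ℂ) * conj z)
        - (((2*R+4*C) * t^4 : ℝ):ℂ)
        - (B:ℂ) * ((t^2:ℝ):ℂ) * (((t^2:ℝ):ℂ) * z - (C:ℂ) * conj z))
        = (((t^4:ℝ)):ℂ) * (z ^ 4 - ((A:ℂ) + (B:ℂ)) * z ^ 3
          - (2*(C:ℂ) + 2*(R:ℂ)) * z ^ 2 + (C:ℂ) * ((B:ℂ) - (A:ℂ)) * z + (C:ℂ) ^ 2) := by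
      have hzc' : z * conj z = ((t:ℝ):ℂ)^2 := by rw [hzc]; push_cast; ring
      push_cast
      linear_combination (2*(C:ℂ)*((t:ℝ):ℂ)^2*z^2 + (C:ℂ)^2*(z*conj z + ((t:ℝ):ℂ)^2)
        - (A:ℂ)*(C:ℂ)*((t:ℝ):ℂ)^2*z + (B:ℂ)*(C:ℂ)*((t:ℝ):ℂ)^2*z) * hzc'
    have h2 : z^2 * ((((t^2:ℝ):ℂ) * z + (C:ℂ) * conj z) ^ 2
        - (A:ℂ) * ((t^2:ℝ):ℂ) * (((t^2:ℝ):ℂ) * z + (C:ℂ) * conj z)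
        - (((2*R+4*C) * t^4 : ℝ):ℂ)
        - (B:ℂ) * ((t^2:ℝ):ℂ) * (((t^2:ℝ):ℂ) * z - (C:ℂ) * conj z)) = 0 := by
      rw [hstep, hq, mul_zero]
    rcases mul_eq_zero.1 h2 with h | h
    · exact absurd (pow_eq_zero_iff (by norm_num)|>.1 h) hz0
    · exact h
  -- real/imaginary extraction
  set xr := z.re with hxr
  set yi := z.im with hyi
  have hzeq : z = (xr:ℂ) + (yi:ℂ) * Complex.I := (Complex.re_add_im z).symm
  have hconj : conj z = (xr:ℂ) - (yi:ℂ) * Complex.I := by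
    rw [hzeq]; simp [Complex.ext_iff]
  have hxy : xr ^ 2 + yi ^ 2 = t ^ 2 := by
    rw [htdef, hxr, hyi, Complex.sq_norm, Complex.normSq_apply]; ring
  rw [hconj, hzeq] at hmain
  rw [Complex.ext_iff] at hmain
  obtain ⟨hre0, him0⟩ := hmain
  push_cast at hre0 him0
  simp only [Complex.add_re, Complex.add_im, Complex.sub_re, Complex.sub_im,
    Complex.mul_re, Complex.mul_im, Complex.ofReal_re, Complex.ofReal_im,
    Complex.I_re, Complex.I_im, Complex.zero_re, Complex.zero_im, Complex.re_ofNat,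
    Complex.im_ofNat, ← Complex.ofReal_pow, pow_two] at hre0 him0
  norm_num at hre0 him0
  set P := t ^ 2 + C with hP
  set Q := t ^ 2 - C with hQ
  have hre : P^2*xr^2 - Q^2*yi^2 - A*t^2*P*xr - (2*R+4*C)*t^4 - B*t^2*Q*xr = 0 := by
    rw [hP, hQ]; linear_combination hre0
  have him : 2*P*Q*xr*yi - A*t^2*Q*yi - B*t^2*P*yi = 0 := by
    rw [hP, hQ]; linear_combination him0
  set sc := ‖c‖ with hsc
  have hsc0 : 0 ≤ sc := norm_nonneg c
  have hCsc : C = sc^2 := hC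
  clear hre0 him0 hz hzc hc4 hq hzeq hconj h₂ h₃ hp₁ hp₂ hp₃ hp₄ hlt htdef hA hB hR h₁
  clear_value xr yi t P Q A B C R sc
  -- basic P Q facts
  have htC : C ≤ t := le_trans hC1.le ht
  have hmm : 0 ≤ (t-1)*(t-C) := mul_nonneg (by linarith) (by linarith)
  have hmm2 : 0 ≤ (t-1)*(t+C) := mul_nonneg (by linarith) (by linarith)
  have hPl : (1+C)*t ≤ P := by rw [hP]; linarith [hmm]
  have hQl : (1-C)*t ≤ Q := by rw [hQ]; linarith [hmm2]
  have hmm4 : 0 ≤ (t-1)*(t+1) := mul_nonneg (by linarith) (by linarith)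
  have hmm3 : (1:ℝ) ≤ t^2 := by nlinarith only [hmm4]
  have hP0 : 0 < P := by rw [hP]; linarith only [hmm3, hC0]
  have hQ0 : 0 < Q := by rw [hQ]; linarith only [hmm3, hC1]
  have hPQ : P^2 - Q^2 = 4*C*t^2 := by rw [hP, hQ]; ring
  have hA1 : A ≤ 1 := by linarith
  rcases eq_or_ne yi 0 with hy | hy
  · -- yi = 0 : xr = ± t
    rw [hy] at hxy
    have hx2 : (xr - t)*(xr + t) = 0 := by linear_combination hxy
    rcases mul_eq_zero.1 hx2 with h | h
    · -- xr = t
      have hx : xr = t := by linarith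
      rw [hy, hx] at hre
      have hre' : P^2*t^2 - A*t^3*P - 2*R*t^4 - 4*C*t^4 - B*t^3*Q = 0 := by
        linear_combination hre
      have hα0 : 0 ≤ P - (1+C)*t := by linarith only [hPl]
      have hCt0 : 0 ≤ C*t := mul_nonneg hC0 ht0.le
      have h1Ct : 0 ≤ (1-C)*t := mul_nonneg h1C.le ht0.le
      have hN0 : 0 < Q + (1-C)*t := by linarith only [hQ0, h1Ct]
      have hM0 : (0:ℝ) < P + (1+C)*t := by linarith only [hP0, ht0, hCt0]
      have e1 : A*t ≤ (P + (1+C)*t)/2 := by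
        have h1 := mul_le_mul_of_nonneg_right hA1 ht0.le
        linarith only [h1, hCt0, hPl]
      have e2 : B*t ≤ (Q + (1-C)*t)/2 := by
        have h1 := mul_le_mul_of_nonneg_right hBC.le ht0.le
        linarith only [h1, hQl]
      have inner : B*t*(P+(1+C)*t) ≤ (P+(1+C)*t-A*t)*(Q+(1-C)*t) := by
        nlinarith only [mul_le_mul_of_nonneg_right e1 hN0.le,
          mul_le_mul_of_nonneg_right e2 hM0.le]
      have hid : (Q-(1-C)*t)*(Q+(1-C)*t) = (P-(1+C)*t)*(P+(1+C)*t) := by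
        linear_combination -hPQ
      have h5 : B*t*((Q-(1-C)*t)*(Q+(1-C)*t)) = B*t*((P-(1+C)*t)*(P+(1+C)*t)) := by
        linear_combination (B*t)*hid
      have key1 : B*t*(Q - (1-C)*t) ≤ (P - (1+C)*t)*(P + (1+C)*t - A*t) := by
        nlinarith only [mul_le_mul_of_nonneg_left inner hα0, h5, hN0]
      have c1 : t^2*(B*t*(Q - (1-C)*t)) ≤ t^2*((P - (1+C)*t)*(P + (1+C)*t - A*t)) :=
        mul_le_mul_of_nonneg_left key1 (sq_nonneg t)
      have c2 : t^4*(A*(1+C)+2*R+B*(1-C)) < t^4*(1-C)^2 :=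
        mul_lt_mul_of_pos_left h3' (by positivity)
      linarith only [hre', c1, c2]
    · -- xr = -t
      have hx : xr = -t := by linarith
      rw [hy, hx] at hre
      have hre' : t^2*P^2 + A*t^3*P + B*t^3*Q - 2*R*t^4 - 4*C*t^4 = 0 := by
        linear_combination hre
      have e5 : A*t^3*P - 2*(A*sc)*t^4 = A*t^3*(t-sc)^2 := by rw [hP, hCsc]; ring
      have d1 : 0 ≤ A*t^3*(t-sc)^2 := by positivity
      have d2 : 2*R*t^4 ≤ 2*(A*sc)*t^4 := by
        have h6 := mul_le_mul_of_nonneg_right hRub (by positivity : (0:ℝ) ≤ t^4)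
        linarith only [h6]
      have d3 : 0 < t^2*Q^2 := by positivity
      have d4 : 0 ≤ B*t^3*Q := by positivity
      have e6 : t^2*P^2 - 4*C*t^4 = t^2*Q^2 := by rw [hP, hQ]; ring
      linarith only [hre', d1, d2, d3, d4, e5, e6]
  · -- yi ≠ 0
    have hxq : 2*P*Q*xr - (A*t^2*Q + B*t^2*P) = 0 := by
      have hf : (2*P*Q*xr - (A*t^2*Q + B*t^2*P)) * yi = 0 := by linear_combination him
      rcases mul_eq_zero.1 hf with h | h
      · exact h
      · exact absurd h hy
    have hre2 : (P^2+Q^2)*xr^2 - A*t^2*P*xr - B*t^2*Q*xr - (2*R+4*C)*t^4 - Q^2*t^2 = 0 := by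
      linear_combination hre + Q^2*hxy
    have hbig : 4*C*t^6*(B^2*P^2 - A^2*Q^2)
        - 4*P^2*Q^2*(Q^2*t^2 + (2*R+4*C)*t^4) = 0 := by
      linear_combination (4*P^2*Q^2) * hre2
        - ((P^2+Q^2)*(2*P*Q*xr + t^2*(A*Q+B*P)) - 2*P*Q*t^2*(A*P+B*Q)) * hxq
        - (t^4*(B^2*P^2 - A^2*Q^2)) * hPQ
    have f1 : 0 ≤ Q - B*t := by
      have h7 := mul_le_mul_of_nonneg_right hBC.le ht0.le
      linarith only [h7, hQl]
    have f1' : (0:ℝ) ≤ Q + B*t := by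
      have h8 : 0 ≤ B*t := mul_nonneg hB0 ht0.le
      linarith only [h8, hQ0]
    have g1 : 0 ≤ C*t^4*P^2*((Q - B*t)*(Q + B*t)) :=
      mul_nonneg (by positivity) (mul_nonneg f1 f1')
    have g2 : 0 ≤ P^2*Q^2*t^4*(2*R + 2*A*C) :=
      mul_nonneg (by positivity) (by linarith)
    have g3 : 0 ≤ P^2*Q^2*t^4*(C*(2 - 2*A)) :=
      mul_nonneg (by positivity) (mul_nonneg hC0 (by linarith))
    have g4 : 0 < 4*P^2*Q^4*t^2 := by positivity
    have g5 : 0 ≤ 4*C*P^2*Q^2*t^4 := by positivity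
    have g6 : 0 ≤ 4*C*A^2*Q^2*t^6 := by positivity
    linarith only [hbig, g1, g2, g3, g4, g5, g6]
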